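/- Let β ∈ (1, 2), λ, κ > 0, a₁, a₂ ∈ ℝ, r₂ ≥ 0 and c₀, c₁ ≥ 0. Assume the discriminant condition ((a₁(a₁ − a₂) + κ/λ − 1) · β(β − 1)) / ((2 + β)(1 + β)) ≥ (β² (2a₁ − a₂)²) / (4 (2 + β)²). Then the function g(r) := λβ r^β (r² − |2a₁ − a₂| r + a₁(a₁ − a₂) + κ/λ − 1) − κβ r^{β−1} r₂ − c₁ r^{β/2} − c₀ is convex on (0, ∞). -/

import Mathlib

open Real

set_option maxHeartbeats 1000000 in
/-- Convexity of the comparison function `g_{ε,a₁,a₂}(·, r₂)` (computation (WW-) under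
condition (WW*)) in the proof of Example 1.4. -/
theorem stmt16 (β lam kap a₁ a₂ r₂ c₀ c₁ : ℝ)
    (hβ1 : 1 < β) (hβ2 : β < 2) (hlam : 0 < lam) (hkap : 0 < kap)
    (hr₂ : 0 ≤ r₂) (hc₀ : 0 ≤ c₀) (hc₁ : 0 ≤ c₁)
    (hdisc : β ^ 2 * (2 * a₁ - a₂) ^ 2 / (4 * (2 + β) ^ 2)
      ≤ (a₁ * (a₁ - a₂) + kap / lam - 1) * (β * (β - 1)) / ((2 + β) * (1 + β))) :
    ConvexOn ℝ (Set.Ioi (0 : ℝ))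
      (fun r : ℝ => lam * β * r ^ β * (r ^ 2 - |2 * a₁ - a₂| * r
          + a₁ * (a₁ - a₂) + kap / lam - 1)
        - kap * β * r ^ (β - 1) * r₂ - c₁ * r ^ (β / 2) - c₀) := by
  have hβ0 : (0:ℝ) < β := by linarith
  set M := |2 * a₁ - a₂| with hM
  set K := a₁ * (a₁ - a₂) + kap / lam - 1 with hK
  set f : ℝ → ℝ := fun r : ℝ => lam * β * r ^ β * (r ^ 2 - M * r
          + a₁ * (a₁ - a₂) + kap / lam - 1)
        - kap * β * r ^ (β - 1) * r₂ - c₁ * r ^ (β / 2) - c₀ with hf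
  set f' : ℝ → ℝ := fun x => lam * β * ((β * x ^ (β-1)) * (x^2 - M*x + K)
        + x ^ β * (2*x - M))
      - kap * β * ((β-1) * x ^ (β-1-1)) * r₂ - c₁ * (β/2 * x ^ (β/2 - 1)) with hf'
  set f'' : ℝ → ℝ := fun x => lam * β * ((β * ((β-1) * x ^ (β-1-1))) * (x^2 - M*x + K)
        + (β * x ^ (β-1)) * (2*x - M)
        + ((β * x ^ (β-1)) * (2*x - M) + x ^ β * 2))
      - kap * β * (β-1) * ((β-1-1) * x ^ (β-1-1-1)) * r₂
      - c₁ * (β/2) * ((β/2-1) * x ^ (β/2 - 1 - 1)) with hf''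
  have hd1 : ∀ x ∈ Set.Ioi (0:ℝ), HasDerivAt f (f' x) x := by
    intro x hx
    have hx0 : x ≠ 0 := ne_of_gt hx
    have h1 : HasDerivAt (fun r : ℝ => r ^ β) (β * x ^ (β - 1)) x :=
      Real.hasDerivAt_rpow_const (Or.inl hx0)
    have hpoly : HasDerivAt (fun r : ℝ => r ^ 2 - M * r
          + a₁ * (a₁ - a₂) + kap / lam - 1) (2*x - M) x := by
      have := ((hasDerivAt_pow 2 x).sub ((hasDerivAt_id x).const_mul M))
      simpa using ((this.add_const (a₁ * (a₁ - a₂))).add_const (kap/lam)).sub_const 1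
    have h2 : HasDerivAt (fun r : ℝ => r ^ (β-1)) ((β-1) * x ^ (β-1-1)) x :=
      Real.hasDerivAt_rpow_const (Or.inl hx0)
    have h3 : HasDerivAt (fun r : ℝ => r ^ (β/2)) (β/2 * x ^ (β/2-1)) x :=
      Real.hasDerivAt_rpow_const (Or.inl hx0)
    have hmain := (h1.mul hpoly).const_mul (lam * β)
    have htot := ((hmain.sub ((h2.const_mul (kap * β)).mul_const r₂)).sub
        (h3.const_mul c₁)).sub_const c₀
    convert htot using 1
    · rfl
    · rfl
    · ext r; rw [hf]; simp only [Pi.sub_apply, Pi.mul_apply]; ring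
    · simp only [hf', hK]; ring
  have hd2 : ∀ x ∈ Set.Ioi (0:ℝ), HasDerivAt f' (f'' x) x := by
    intro x hx
    have hx0 : x ≠ 0 := ne_of_gt hx
    have h1 : HasDerivAt (fun r : ℝ => r ^ β) (β * x ^ (β - 1)) x :=
      Real.hasDerivAt_rpow_const (Or.inl hx0)
    have h2 : HasDerivAt (fun r : ℝ => r ^ (β-1)) ((β-1) * x ^ (β-1-1)) x :=
      Real.hasDerivAt_rpow_const (Or.inl hx0)
    have h3 : HasDerivAt (fun r : ℝ => r ^ (β-1-1)) ((β-1-1) * x ^ (β-1-1-1)) x :=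
      Real.hasDerivAt_rpow_const (Or.inl hx0)
    have h4 : HasDerivAt (fun r : ℝ => r ^ (β/2-1)) ((β/2-1) * x ^ (β/2-1-1)) x :=
      Real.hasDerivAt_rpow_const (Or.inl hx0)
    have hpoly : HasDerivAt (fun r : ℝ => r ^ 2 - M * r + K) (2*x - M) x := by
      have := ((hasDerivAt_pow 2 x).sub ((hasDerivAt_id x).const_mul M))
      simpa using this.add_const K
    have hlin : HasDerivAt (fun r : ℝ => 2*r - M) 2 x := by
      simpa using ((hasDerivAt_id x).const_mul 2).sub_const M
    have hA : HasDerivAt (fun r : ℝ => (β * r ^ (β-1)) * (r^2 - M*r + K))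
        ((β * ((β-1) * x ^ (β-1-1))) * (x^2 - M*x + K) + (β * x ^ (β-1)) * (2*x - M)) x :=
      (h2.const_mul β).mul hpoly
    have hB : HasDerivAt (fun r : ℝ => r ^ β * (2*r - M))
        ((β * x ^ (β-1)) * (2*x - M) + x ^ β * 2) x := h1.mul hlin
    have htot := (((hA.add hB).const_mul (lam * β)).sub
        ((h3.const_mul (kap * β * (β-1))).mul_const r₂)).sub
        ((h4.const_mul (β/2)).const_mul c₁)
    convert htot using 1
    · rfl
    · rfl
    · ext r; simp only [hf', Pi.sub_apply, Pi.add_apply]; ring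
    · simp only [hf'']; ring
  have hderiv_eq : ∀ x ∈ Set.Ioi (0:ℝ), deriv f x = f' x := fun x hx => (hd1 x hx).deriv
  have hnn : ∀ x ∈ Set.Ioi (0:ℝ), 0 ≤ f'' x := by
    intro x hx
    have hx0 : (0:ℝ) < x := hx
    have hxne : x ≠ 0 := ne_of_gt hx0
    have hp : (0:ℝ) < x ^ (β-1-1) := Real.rpow_pos_of_pos hx0 _
    have hq : (0:ℝ) < x ^ (β-1-1-1) := Real.rpow_pos_of_pos hx0 _
    have hs : (0:ℝ) < x ^ (β/2-1-1) := Real.rpow_pos_of_pos hx0 _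
    have e1 : x ^ (β-1) = x ^ (β-1-1) * x := by
      rw [← Real.rpow_add_one hxne (β-1-1)]
      congr 1; ring
    have e2 : x ^ β = x ^ (β-1-1) * x * x := by
      rw [← Real.rpow_add_one hxne (β-1-1), ← Real.rpow_add_one hxne (β-1-1+1)]
      congr 1; ring
    have h2β : (0:ℝ) < 2 + β := by linarith
    have h1β : (0:ℝ) < 1 + β := by linarith
    have hM2 : M^2 = (2*a₁-a₂)^2 := sq_abs _
    have hdisc' : β^2 * M^2 * ((2+β)*(1+β)) ≤ K * (β*(β-1)) * (4*(2+β)^2) := by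
      rw [hM2]
      rw [div_le_div_iff₀ (by positivity) (by positivity)] at hdisc
      linarith [hdisc]
    have hBle : β^2*M^2*(1+β) ≤ 4*K*(β*(β-1))*(2+β) := by
      have h2 : (β^2*M^2*(1+β)) * (2+β) ≤ (4*K*(β*(β-1))*(2+β)) * (2+β) := by
        nlinarith [hdisc']
      exact le_of_mul_le_mul_right h2 h2β
    have hBle4 : β^2*(1+β)^2*M^2 ≤ 4*(β+2)*(1+β)*(β*(β-1))*K := by
      nlinarith [mul_le_mul_of_nonneg_right hBle h1β.le]
    have hApos : (0:ℝ) < 4*((β+2)*(β+1)) := by positivity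
    have hQ : 0 ≤ (β+2)*(β+1)*x^2 - M*β*(β+1)*x + β*(β-1)*K := by
      nlinarith [sq_nonneg (2*(β+2)*(β+1)*x - β*(β+1)*M), hBle4, hApos]
    have hmain : 0 ≤ lam * β * x^(β-1-1) *
        ((β+2)*(β+1)*x^2 - M*β*(β+1)*x + β*(β-1)*K) := by positivity
    have hT2 : 0 ≤ -(kap * β * (β-1) * ((β-1-1) * x ^ (β-1-1-1)) * r₂) := by
      have h1 : kap * β * (β-1) * ((β-1-1) * x ^ (β-1-1-1)) ≤ 0 :=
        mul_nonpos_of_nonneg_of_nonpos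
          (mul_nonneg (mul_nonneg hkap.le hβ0.le) (by linarith))
          (mul_nonpos_of_nonpos_of_nonneg (by linarith) hq.le)
      linarith [mul_nonneg (neg_nonneg.mpr h1) hr₂]
    have hT3 : 0 ≤ -(c₁ * (β/2) * ((β/2-1) * x ^ (β/2 - 1 - 1))) := by
      have h1 : (β/2-1) * x ^ (β/2-1-1) ≤ 0 :=
        mul_nonpos_of_nonpos_of_nonneg (by linarith) hs.le
      have h2 : 0 ≤ (c₁ * (β/2)) * (-((β/2-1) * x ^ (β/2-1-1))) :=
        mul_nonneg (by positivity) (neg_nonneg.mpr h1)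
      linarith [h2]
    have heq : f'' x = lam * β * x^(β-1-1) *
        ((β+2)*(β+1)*x^2 - M*β*(β+1)*x + β*(β-1)*K)
        + (-(kap * β * (β-1) * ((β-1-1) * x ^ (β-1-1-1)) * r₂))
        + (-(c₁ * (β/2) * ((β/2-1) * x ^ (β/2 - 1 - 1)))) := by
      simp only [hf'']
      rw [e2, e1]; ring
    rw [heq]; exact add_nonneg (add_nonneg hmain hT2) hT3
  have hdiff : DifferentiableOn ℝ f (Set.Ioi 0) :=
    fun x hx => (hd1 x hx).differentiableAt.differentiableWithinAt
  refine convexOn_of_deriv2_nonneg (convex_Ioi 0) hdiff.continuousOn ?_ ?_ ?_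
  · rw [interior_Ioi]; exact hdiff
  · rw [interior_Ioi]
    intro x hx
    have hev : deriv f =ᶠ[nhds x] f' :=
      Filter.eventuallyEq_of_mem (isOpen_Ioi.mem_nhds hx) hderiv_eq
    exact ((hd2 x hx).differentiableAt.congr_of_eventuallyEq hev).differentiableWithinAt
  · rw [interior_Ioi]
    intro x hx
    have hev : deriv f =ᶠ[nhds x] f' :=
      Filter.eventuallyEq_of_mem (isOpen_Ioi.mem_nhds hx) hderiv_eq
    have h2 : deriv (deriv f) x = f'' x := by
      rw [hev.deriv_eq]; exact (hd2 x hx).deriv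
    rw [show deriv^[2] f x = deriv (deriv f) x from rfl, h2]
    exact hnn x hx
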